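/- arXiv:1210.1277 — 3 statements merged into one kernel-verified Lean document; each statement's English description precedes it below -/
import Mathlib

section
/- Let Ω be a domain in ℂ and let f₀, …, fₙ be holomorphic functions on Ω that are linearly independent over ℂ. Then there exists a set E ⊆ Ω that is discrete in Ω (has no accumulation points in Ω) such that for any complex numbers λ₀, …, λₙ not all zero, every point z₀ ∈ Ω at which the function g = Σⱼ λⱼ fⱼ vanishes together with its derivatives g', …, g⁽ⁿ⁾ belongs to E. -/
open Complex Filter
open Topology

private lemma an_iter {f : ℂ → ℂ} {s : Set ℂ} (hf : AnalyticOnNhd ℂ f s) (k : ℕ) :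
    AnalyticOnNhd ℂ (iteratedDeriv k f) s := by
  rw [iteratedDeriv_eq_iterate]; exact hf.iterated_deriv k

private lemma iter_comb {s : Set ℂ} (hs : IsOpen s) {m : ℕ} {F : Fin m → ℂ → ℂ}
    (hF : ∀ j, AnalyticOnNhd ℂ (F j) s) (c : Fin m → ℂ) (k : ℕ) :
    ∀ z ∈ s, iteratedDeriv k (fun z => ∑ j, c j * F j z) z
      = ∑ j, c j * iteratedDeriv k (F j) z := by
  induction k with
  | zero => intro z hz; simp
  | succ k IH =>
    intro z hz
    rw [iteratedDeriv_succ]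
    have h1 : deriv (iteratedDeriv k fun z => ∑ j, c j * F j z) z
        = deriv (fun z => ∑ j, c j * iteratedDeriv k (F j) z) z := by
      apply Filter.EventuallyEq.deriv_eq
      filter_upwards [hs.mem_nhds hz] with w hw
      exact IH w hw
    have hdiff : ∀ j ∈ Finset.univ, DifferentiableAt ℂ
        (fun w => c j * iteratedDeriv k (F j) w) z := fun j _ =>
      ((an_iter (hF j) k z hz).differentiableAt).const_mul _
    rw [h1, deriv_fun_sum hdiff]
    refine Finset.sum_congr rfl fun j _ => ?_
    rw [deriv_const_mul _ ((an_iter (hF j) k z hz).differentiableAt), iteratedDeriv_succ]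

private lemma iter_add {s : Set ℂ} (hs : IsOpen s) {A B : ℂ → ℂ}
    (hA : AnalyticOnNhd ℂ A s) (hB : AnalyticOnNhd ℂ B s) (k : ℕ) :
    ∀ z ∈ s, iteratedDeriv k (fun z => A z + B z) z
      = iteratedDeriv k A z + iteratedDeriv k B z := by
  induction k with
  | zero => intro z hz; simp
  | succ k IH =>
    intro z hz
    rw [iteratedDeriv_succ]
    have h1 : deriv (iteratedDeriv k fun z => A z + B z) z
        = deriv (fun z => iteratedDeriv k A z + iteratedDeriv k B z) z := by
      apply Filter.EventuallyEq.deriv_eq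
      filter_upwards [hs.mem_nhds hz] with w hw
      exact IH w hw
    rw [h1, deriv_fun_add ((an_iter hA k z hz).differentiableAt)
      ((an_iter hB k z hz).differentiableAt), iteratedDeriv_succ, iteratedDeriv_succ]

private lemma iter_mul_vanish {s : Set ℂ} (hs : IsOpen s) {w : ℂ} (hw : w ∈ s) :
    ∀ (k : ℕ) (φ ψ : ℂ → ℂ), AnalyticOnNhd ℂ φ s → AnalyticOnNhd ℂ ψ s →
      (∀ j ≤ k, iteratedDeriv j φ w = 0) →
      iteratedDeriv k (fun z => φ z * ψ z) w = 0 := by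
  intro k
  induction k with
  | zero =>
    intro φ ψ hφ hψ h
    have h0 : φ w = 0 := by simpa using h 0 le_rfl
    simp [iteratedDeriv_zero, h0]
  | succ k IH =>
    intro φ ψ hφ hψ h
    rw [iteratedDeriv_succ']
    have heq : Set.EqOn (deriv fun z => φ z * ψ z)
        (fun z => deriv φ z * ψ z + φ z * deriv ψ z) s := fun z hz =>
      deriv_mul ((hφ z hz).differentiableAt) ((hψ z hz).differentiableAt)
    rw [heq.iteratedDeriv_of_isOpen hs k hw]
    have hφ' := hφ.deriv_of_isOpen hs
    have hψ' := hψ.deriv_of_isOpen hs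
    rw [iter_add hs (hφ'.mul hψ) (hφ.mul hψ') k w hw]
    have t1 : iteratedDeriv k (fun z => deriv φ z * ψ z) w = 0 := by
      refine IH (deriv φ) ψ hφ' hψ fun j hj => ?_
      have := h (j + 1) (by omega)
      rwa [iteratedDeriv_succ'] at this
    have t2 : iteratedDeriv k (fun z => φ z * deriv ψ z) w = 0 :=
      IH φ (deriv ψ) hφ hψ' fun j hj => h j (by omega)
    rw [t1, t2, add_zero]

private lemma key_nondeg : ∀ (n : ℕ) (Ω : Set ℂ), IsOpen Ω → IsPreconnected Ω →
    ∀ (f : Fin (n + 1) → ℂ → ℂ), (∀ j, AnalyticOnNhd ℂ (f j) Ω) →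
    (∀ c : Fin (n + 1) → ℂ, (∀ z ∈ Ω, ∑ j, c j * f j z = 0) → c = 0) →
    ∃ z ∈ Ω, ∀ c : Fin (n + 1) → ℂ,
      (∀ k ≤ n, ∑ j, c j * iteratedDeriv k (f j) z = 0) → c = 0 := by
  intro n
  induction n with
  | zero =>
    intro Ω hO hC f hf hind
    have hne : ∃ z ∈ Ω, f 0 z ≠ 0 := by
      by_contra hcon
      push_neg at hcon
      have := hind (fun _ => 1) (fun z hz => by simpa using hcon z hz)
      simpa using congrFun this 0
    obtain ⟨z, hz, hz0⟩ := hne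
    refine ⟨z, hz, fun c hc => ?_⟩
    have h0 := hc 0 le_rfl
    simp [Fin.sum_univ_one] at h0
    funext j
    have : j = 0 := by omega
    rw [this]
    rcases h0 with h | h
    · simpa using h
    · exact absurd h hz0
  | succ n IH =>
    intro Ω hO hC f hf hind
    -- f 0 is not identically zero
    have hne : ∃ z ∈ Ω, f 0 z ≠ 0 := by
      by_contra hcon
      push_neg at hcon
      have := hind (Pi.single 0 1) (fun z hz => by
        simp [Pi.single_apply]
        exact hcon z hz)
      simpa using congrFun this 0
    obtain ⟨z₁, hz₁, hz₁0⟩ := hne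
    -- a ball around z₁ inside Ω where f 0 ≠ 0
    have hnhds : {z | z ∈ Ω ∧ f 0 z ≠ 0} ∈ 𝓝 z₁ := by
      have h1 : Ω ∈ 𝓝 z₁ := hO.mem_nhds hz₁
      have h2 : {z | f 0 z ≠ 0} ∈ 𝓝 z₁ :=
        (hf 0 z₁ hz₁).continuousAt.eventually_ne hz₁0
      filter_upwards [h1, h2] with w hw1 hw2 using ⟨hw1, hw2⟩
    obtain ⟨r, hr, hball⟩ := Metric.mem_nhds_iff.1 hnhds
    set D := Metric.ball z₁ r with hD
    have hDopen : IsOpen D := Metric.isOpen_ball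
    have hDsub : D ⊆ Ω := fun z hz => (hball hz).1
    have hD0 : ∀ z ∈ D, f 0 z ≠ 0 := fun z hz => (hball hz).2
    have hz₁D : z₁ ∈ D := Metric.mem_ball_self hr
    have hDconn : IsPreconnected D := (convex_ball z₁ r).isPreconnected
    -- auxiliary functions
    set h : Fin (n + 1) → ℂ → ℂ := fun i z => f i.succ z * (f 0 z)⁻¹ with hh
    set F : Fin (n + 1) → ℂ → ℂ := fun i => deriv (h i) with hF
    have hinv : AnalyticOnNhd ℂ (fun z => (f 0 z)⁻¹) D :=
      ((hf 0).mono hDsub).inv hD0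
    have hhan : ∀ i, AnalyticOnNhd ℂ (h i) D := fun i =>
      ((hf i.succ).mono hDsub).mul hinv
    have hFan : ∀ i, AnalyticOnNhd ℂ (F i) D := fun i =>
      (hhan i).deriv_of_isOpen hDopen
    -- linear independence of F on D
    have hFind : ∀ c : Fin (n + 1) → ℂ, (∀ z ∈ D, ∑ i, c i * F i z = 0) → c = 0 := by
      intro c hc
      set u : ℂ → ℂ := fun z => ∑ i, c i * h i z with hu
      have huan : AnalyticOnNhd ℂ u D :=
        Finset.analyticOnNhd_fun_sum _ (fun i _ => analyticOnNhd_const.mul (hhan i))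
      have hud : ∀ z ∈ D, deriv u z = ∑ i, c i * F i z := by
        intro z hz
        rw [hu]
        rw [deriv_fun_sum (fun i _ => ((hhan i z hz).differentiableAt).const_mul _)]
        exact Finset.sum_congr rfl fun i _ =>
          deriv_const_mul _ ((hhan i z hz).differentiableAt)
      -- u is constant on D
      have hconst : ∀ z ∈ D, u z = u z₁ := by
        intro z hz
        refine (convex_ball z₁ r).is_const_of_fderivWithin_eq_zero
          (huan.differentiableOn) (fun x hx => ?_) hz hz₁D
        rw [fderivWithin_of_isOpen hDopen hx]
        have hdz : deriv u x = 0 := by rw [hud x hx, hc x hx]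
        ext1
        rw [fderiv_apply_one_eq_deriv]
        simp [hdz]
      set K := u z₁ with hK
      -- the combination -K * f 0 + ∑ c i * f i.succ vanishes on D
      set d : Fin (n + 2) → ℂ := Fin.cons (-K) c with hd
      have hcombD : ∀ z ∈ D, ∑ j, d j * f j z = 0 := by
        intro z hz
        rw [Fin.sum_univ_succ]
        simp only [hd, Fin.cons_zero, Fin.cons_succ]
        have h1 : ∑ i : Fin (n + 1), c i * f i.succ z = K * f 0 z := by
          calc ∑ i : Fin (n + 1), c i * f i.succ z
              = ∑ i : Fin (n + 1), c i * h i z * f 0 z := by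
                refine Finset.sum_congr rfl fun i _ => ?_
                rw [hh]
                field_simp [hD0 z hz]
            _ = (∑ i, c i * h i z) * f 0 z := by rw [Finset.sum_mul]
            _ = u z * f 0 z := rfl
            _ = K * f 0 z := by rw [hconst z hz]
        rw [h1]; ring
      -- identity theorem: the combination vanishes on Ω
      have hcomban : AnalyticOnNhd ℂ (fun z => ∑ j, d j * f j z) Ω :=
        Finset.analyticOnNhd_fun_sum _ (fun j _ => analyticOnNhd_const.mul (hf j))
      have hcombΩ : Set.EqOn (fun z => ∑ j, d j * f j z) 0 Ω := by
        refine hcomban.eqOn_zero_of_preconnected_of_eventuallyEq_zero hC hz₁ ?_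
        filter_upwards [hDopen.mem_nhds hz₁D] with w hw using hcombD w hw
      have hdzero : d = 0 := hind d (fun z hz => hcombΩ hz)
      funext i
      have := congrFun hdzero i.succ
      simpa [hd] using this
    -- apply induction hypothesis on D
    obtain ⟨w, hwD, hwnd⟩ := IH D hDopen hDconn F hFan hFind
    refine ⟨w, hDsub hwD, fun c hc => ?_⟩
    -- G = ∑ c j * f j has derivatives 0..n+1 vanishing at w
    set G : ℂ → ℂ := fun z => ∑ j, c j * f j z with hG
    have hGan : AnalyticOnNhd ℂ G Ω :=
      Finset.analyticOnNhd_fun_sum _ (fun j _ => analyticOnNhd_const.mul (hf j))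
    have hGv : ∀ k ≤ n + 1, iteratedDeriv k G w = 0 := by
      intro k hk
      rw [hG, iter_comb hO (fun j => hf j) c k w (hDsub hwD)]
      exact hc k hk
    -- H = G / f 0 has derivatives 0..n+1 vanishing at w
    set H : ℂ → ℂ := fun z => G z * (f 0 z)⁻¹ with hH
    have hHan : AnalyticOnNhd ℂ H D := (hGan.mono hDsub).mul hinv
    have hHv : ∀ k ≤ n + 1, iteratedDeriv k H w = 0 := fun k hk =>
      iter_mul_vanish hDopen hwD k G _ (hGan.mono hDsub) hinv (fun j hj => hGv j (hj.trans hk))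
    -- H = c 0 + ∑ c i.succ * h i on D
    have hHeq : Set.EqOn H (fun z => c 0 + ∑ i, c i.succ * h i z) D := by
      intro z hz
      simp only [hH, hG, hh]
      rw [Finset.sum_mul, Fin.sum_univ_succ]
      have : c 0 * f 0 z * (f 0 z)⁻¹ = c 0 := by field_simp [hD0 z hz]
      rw [this]
      congr 1
      exact Finset.sum_congr rfl fun i _ => by ring
    -- deriv H = ∑ c i.succ * F i on D
    have hderH : Set.EqOn (deriv H) (fun z => ∑ i, c i.succ * F i z) D := by
      intro z hz
      have h1 : deriv H z = deriv (fun z => c 0 + ∑ i, c i.succ * h i z) z := by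
        apply Filter.EventuallyEq.deriv_eq
        filter_upwards [hDopen.mem_nhds hz] with x hx using hHeq hx
      rw [h1, deriv_const_add,
        deriv_fun_sum (fun i _ => ((hhan i z hz).differentiableAt).const_mul _)]
      exact Finset.sum_congr rfl fun i _ =>
        deriv_const_mul _ ((hhan i z hz).differentiableAt)
    -- the tail coefficients vanish
    have hctail : (fun i : Fin (n + 1) => c i.succ) = 0 := by
      refine hwnd _ (fun k hk => ?_)
      have h1 : iteratedDeriv k (deriv H) w = 0 := by
        rw [← iteratedDeriv_succ']
        exact hHv (k + 1) (by omega)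
      rw [hderH.iteratedDeriv_of_isOpen hDopen k hwD,
        iter_comb hDopen hFan (fun i : Fin (n + 1) => c i.succ) k w hwD] at h1
      exact h1
    -- the head coefficient vanishes
    have hc0 : c 0 = 0 := by
      have h0 := hc 0 (Nat.zero_le _)
      simp only [iteratedDeriv_zero] at h0
      rw [Fin.sum_univ_succ] at h0
      have : ∑ i : Fin (n + 1), c i.succ * f i.succ w = 0 := by
        refine Finset.sum_eq_zero fun i _ => ?_
        rw [show c i.succ = 0 from congrFun hctail i]; ring
      rw [this, add_zero] at h0
      exact (mul_eq_zero.1 h0).resolve_right (hD0 w hwD)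
    funext j
    refine Fin.cases ?_ (fun i => ?_) j
    · exact hc0
    · exact congrFun hctail i

theorem stmt_0 (Ω : Set ℂ) (hΩopen : IsOpen Ω) (hΩconn : IsConnected Ω)
    (n : ℕ) (f : Fin (n + 1) → ℂ → ℂ)
    (hf : ∀ j, DifferentiableOn ℂ (f j) Ω)
    (hind : ∀ c : Fin (n + 1) → ℂ, (∀ z ∈ Ω, ∑ j, c j * f j z = 0) → c = 0) :
    ∃ E ⊆ Ω, (∀ z ∈ Ω, ¬ AccPt z (𝓟 E)) ∧
      ∀ c : Fin (n + 1) → ℂ, c ≠ 0 → ∀ z₀ ∈ Ω,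
        (∀ k ≤ n, iteratedDeriv k (fun z => ∑ j, c j * f j z) z₀ = 0) → z₀ ∈ E := by
  have hfa : ∀ j, AnalyticOnNhd ℂ (f j) Ω := fun j => (hf j).analyticOnNhd hΩopen
  obtain ⟨zs, hzs, hnd⟩ := key_nondeg n Ω hΩopen hΩconn.isPreconnected f hfa hind
  set W : ℂ → ℂ :=
    fun z => (Matrix.of fun k j : Fin (n + 1) => iteratedDeriv (k : ℕ) (f j) z).det with hW
  have hWan : AnalyticOnNhd ℂ W Ω := by
    have hWeq : W = fun z => ∑ σ : Equiv.Perm (Fin (n + 1)),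
        ((Equiv.Perm.sign σ : ℤ) : ℂ) * ∏ i, iteratedDeriv ((σ i : Fin (n+1)) : ℕ) (f i) z := by
      funext z
      show (Matrix.of fun k j : Fin (n + 1) => iteratedDeriv (k : ℕ) (f j) z).det = _
      rw [Matrix.det_apply]
      refine Finset.sum_congr rfl fun σ _ => ?_
      simp [Units.smul_def, zsmul_eq_mul]
    rw [hWeq]
    refine Finset.analyticOnNhd_fun_sum _ fun σ _ => analyticOnNhd_const.mul ?_
    exact Finset.analyticOnNhd_fun_prod _ fun i _ => an_iter (hfa i) _
  have hWzs : W zs ≠ 0 := by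
    intro h0
    obtain ⟨v, hv0, hv⟩ := (Matrix.exists_mulVec_eq_zero_iff).2 h0
    refine hv0 (hnd v fun k hk => ?_)
    have := congrFun hv ⟨k, by omega⟩
    simpa [Matrix.mulVec, dotProduct, mul_comm] using this
  refine ⟨{z | z ∈ Ω ∧ W z = 0}, fun z hz => hz.1, fun z hz hacc => ?_, ?_⟩
  · rw [accPt_iff_frequently] at hacc
    have hfreq : ∃ᶠ y in 𝓝[≠] z, W y = 0 := by
      rw [frequently_nhdsWithin_iff]
      exact hacc.mono fun y hy => ⟨hy.2.2, hy.1⟩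
    have hev : W =ᶠ[𝓝 z] 0 := (hWan z hz).frequently_zero_iff_eventually_zero.1 hfreq
    have : Set.EqOn W 0 Ω :=
      hWan.eqOn_zero_of_preconnected_of_eventuallyEq_zero hΩconn.isPreconnected hz hev
    exact hWzs (this hzs)
  · intro c hc0 z₀ hz₀ hdeep
    refine ⟨hz₀, ?_⟩
    refine (Matrix.exists_mulVec_eq_zero_iff).1 ⟨c, hc0, ?_⟩
    funext k
    have h1 : ∑ j, c j * iteratedDeriv (k : ℕ) (f j) z₀ = 0 := by
      rw [← iter_comb hΩopen hfa c (k : ℕ) z₀ hz₀]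
      exact hdeep (k : ℕ) (by omega)
    simpa [Matrix.mulVec, dotProduct, mul_comm] using h1
end

section
/- Let a₀, …, aₙ be complex numbers, not all zero, and let d₀ < d₁ < ⋯ < dₙ be nonnegative integers. Then the polynomial P(z) = Σⱼ aⱼ z^{dⱼ} has no zero of multiplicity greater than n at any point z₀ ∈ ℂ with z₀ ≠ 0. That is, if z₀ ≠ 0 then not all of P(z₀), P'(z₀), …, P⁽ⁿ⁾(z₀) vanish. -/
open Complex Polynomial

private lemma coeff_aux (p : ℂ[X]) (t : ℕ) (k : ℕ) :
    (X * derivative p - C (t : ℂ) * p).coeff k = ((k : ℂ) - t) * p.coeff k := by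
  cases k with
  | zero => simp [coeff_X_mul_zero]
  | succ k =>
      rw [coeff_sub, coeff_X_mul, coeff_derivative, coeff_C_mul]
      push_cast
      ring

private lemma few_dvd (m : ℕ) : ∀ (p : ℂ[X]), p ≠ 0 → ∀ z₀ : ℂ, z₀ ≠ 0 →
    (X - C z₀) ^ m ∣ p → m < p.support.card := by
  induction m with
  | zero =>
      intro p hp z₀ hz _
      simpa [Finset.card_pos] using Polynomial.support_nonempty.mpr hp
  | succ m ih =>
      intro p hp z₀ hz hdvd
      set t := p.natTrailingDegree with ht
      set q : ℂ[X] := X * derivative p - C (t : ℂ) * p with hq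
      have htmem : t ∈ p.support := natTrailingDegree_mem_support_of_nonzero hp
      have hsub : q.support ⊆ p.support.erase t := by
        intro k hk
        rw [mem_support_iff] at hk
        rw [Finset.mem_erase, mem_support_iff]
        constructor
        · rintro rfl
          rw [hq, coeff_aux] at hk
          simp at hk
        · intro h0
          rw [hq, coeff_aux, h0, mul_zero] at hk
          exact hk rfl
      by_cases hq0 : q = 0
      · -- then p = c X^t, which has no nonzero roots
        have hcoeff : ∀ k, k ≠ t → p.coeff k = 0 := by
          intro k hk
          have := congrArg (fun r => Polynomial.coeff r k) hq0
          simp only [hq, coeff_aux, coeff_zero] at this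
          have hkt : (k : ℂ) ≠ (t : ℂ) := by exact_mod_cast hk
          have := mul_eq_zero.mp this
          rcases this with h | h
          · exact absurd (sub_eq_zero.mp h) hkt
          · exact h
        have hpeq : p = C (p.coeff t) * X ^ t := by
          ext k
          by_cases hk : k = t
          · subst hk; simp
          · rw [hcoeff k hk, coeff_C_mul, coeff_X_pow]
            simp [hk]
        have hroot : p.eval z₀ = 0 := by
          have h1 : (X - C z₀) ∣ p :=
            dvd_trans (dvd_pow_self _ (Nat.succ_ne_zero m)) hdvd
          exact (dvd_iff_isRoot.mp h1)
        rw [hpeq] at hroot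
        simp only [eval_mul, eval_C, eval_pow, eval_X, mul_eq_zero] at hroot
        rcases hroot with h | h
        · exact absurd h (by simpa [ht] using trailingCoeff_nonzero_iff_nonzero.mpr hp)
        · exact absurd h (pow_ne_zero _ hz)
      · have hdvdq : (X - C z₀) ^ m ∣ q := by
          apply dvd_sub
          · exact Dvd.dvd.mul_left
              (by simpa using pow_sub_one_dvd_derivative_of_pow_dvd hdvd) X
          · exact Dvd.dvd.mul_left
              (dvd_trans (pow_dvd_pow _ (Nat.le_succ m)) hdvd) _
        have h1 : m < q.support.card := ih q hq0 z₀ hz hdvdq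
        have h2 : q.support.card ≤ (p.support.erase t).card :=
          Finset.card_le_card hsub
        have h3 : (p.support.erase t).card < p.support.card :=
          Finset.card_erase_lt_of_mem htmem
        omega

theorem stmt_4 (n : ℕ) (a : Fin (n + 1) → ℂ) (ha : a ≠ 0)
    (d : Fin (n + 1) → ℕ) (hd : StrictMono d) (z₀ : ℂ) (hz₀ : z₀ ≠ 0) :
    ∃ k ≤ n, iteratedDeriv k (fun z => ∑ j, a j * z ^ d j) z₀ ≠ 0 := by
  set P : ℂ[X] := ∑ j, C (a j) * X ^ d j with hP
  have hfun : (fun z : ℂ => ∑ j, a j * z ^ d j) = fun z => P.eval z := by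
    funext z
    simp [hP, eval_finset_sum]
  obtain ⟨j₀, hj₀⟩ : ∃ j, a j ≠ 0 := by
    by_contra h
    push_neg at h
    exact ha (funext h)
  have hcoeff : P.coeff (d j₀) = a j₀ := by
    rw [hP, finset_sum_coeff]
    simp only [coeff_C_mul, coeff_X_pow]
    rw [Finset.sum_eq_single j₀]
    · simp
    · intro b _ hb
      have : d j₀ ≠ d b := fun h => hb (hd.injective h.symm)
      simp [this]
    · simp
  have hPne : P ≠ 0 := fun h => hj₀ (by rw [← hcoeff, h, coeff_zero])
  have hcard : P.support.card ≤ n + 1 := by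
    have hsub : P.support ⊆ Finset.image d Finset.univ := by
      intro k hk
      rw [mem_support_iff] at hk
      by_contra hni
      apply hk
      rw [hP, finset_sum_coeff]
      apply Finset.sum_eq_zero
      intro j _
      rw [coeff_C_mul, coeff_X_pow]
      have : k ≠ d j := fun h =>
        hni (Finset.mem_image.mpr ⟨j, Finset.mem_univ j, h.symm⟩)
      simp [this]
    calc P.support.card ≤ (Finset.image d Finset.univ).card :=
          Finset.card_le_card hsub
      _ ≤ Finset.univ.card := Finset.card_image_le
      _ = n + 1 := by simp
  have hiter : ∀ k, iteratedDeriv k (fun z => P.eval z)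
      = fun z => (derivative^[k] P).eval z := by
    intro k
    induction k with
    | zero => simp
    | succ k ihk =>
        rw [iteratedDeriv_succ, ihk, Function.iterate_succ_apply']
        funext z
        exact Polynomial.deriv _
  by_contra h
  push_neg at h
  have hroot : ∀ m ≤ n, (derivative^[m] P).IsRoot z₀ := by
    intro m hm
    have := h m hm
    rw [hfun, hiter m] at this
    exact this
  have hlt : n < P.rootMultiplicity z₀ :=
    (lt_rootMultiplicity_iff_isRoot_iterate_derivative hPne).mpr hroot
  have hdvd : (X - C z₀) ^ (n + 1) ∣ P :=
    dvd_trans (pow_dvd_pow _ hlt) (P.pow_rootMultiplicity_dvd z₀)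
  have := few_dvd (n + 1) P hPne z₀ hz₀ hdvd
  omega
end

section
/- Let Ω be a domain in ℂ and let X ⊆ 𝒪(Ω) be an algebra containing 1 with X' = X (i.e., {f' : f ∈ X} = X). Fix n ≥ 1. Then a set E ⊆ Ω is the zero set of the Wronskian W(f₀,…,fₙ) of some linearly independent f₀,…,fₙ ∈ X if and only if E is the zero set of some non-identically-zero function g ∈ X. -/
open Complex Set Matrix

-- helper 1: constancy from zero derivative on open preconnected set
lemma aux_const_of_deriv_zero {U : Set ℂ} (hU : IsOpen U) (hUc : IsPreconnected U)
    {f : ℂ → ℂ} (hf : ∀ z ∈ U, DifferentiableAt ℂ f z) (hf' : ∀ z ∈ U, deriv f z = 0)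
    {x y : ℂ} (hx : x ∈ U) (hy : y ∈ U) : f x = f y := by
  have key : ∀ z ∈ U, ∀ᶠ w in nhds z, f w = f z := by
    intro z hz
    obtain ⟨ε, hε, hball⟩ := Metric.isOpen_iff.1 hU z hz
    have hconst : ∀ w ∈ Metric.ball z ε, f w = f z := by
      intro w hw
      refine (convex_ball z ε).is_const_of_fderivWithin_eq_zero
        (fun u hu => (hf u (hball hu)).differentiableWithinAt) ?_ hw (Metric.mem_ball_self hε)
      intro u hu
      rw [fderivWithin_of_isOpen Metric.isOpen_ball hu]
      ext m
      simp [← toSpanSingleton_deriv, hf' u (hball hu)]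
    filter_upwards [Metric.ball_mem_nhds z hε] with w hw using hconst w hw
  by_contra hne
  set A : Set ℂ := {w : ℂ | w ∈ U ∧ f w = f x} with hA
  set B : Set ℂ := {w : ℂ | w ∈ U ∧ f w ≠ f x} with hB
  have hAo : IsOpen A := by
    rw [isOpen_iff_mem_nhds]
    rintro z ⟨hzU, hzf⟩
    filter_upwards [key z hzU, hU.mem_nhds hzU] with w hw hwU
    exact ⟨hwU, hw.trans hzf⟩
  have hBo : IsOpen B := by
    rw [isOpen_iff_mem_nhds]
    rintro z ⟨hzU, hzf⟩
    filter_upwards [key z hzU, hU.mem_nhds hzU] with w hw hwU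
    exact ⟨hwU, hw ▸ hzf⟩
  obtain ⟨w, hwU, hwA, hwB⟩ := hUc A B hAo hBo
    (fun z hz => by by_cases h : f z = f x
                    · exact Or.inl ⟨hz, h⟩
                    · exact Or.inr ⟨hz, h⟩)
    ⟨x, hx, hx, rfl⟩ ⟨y, hy, hy, fun h => hne h.symm⟩
  exact hwB.2 hwA.2

-- helper: preconnected subset of a finite set is subsingleton
lemma aux_subsingleton_of_finite {s t : Set ℂ} (hs : IsPreconnected s) (hst : s ⊆ t)
    (ht : t.Finite) : s.Subsingleton := by
  intro a ha b hb
  by_contra hab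
  have hU : IsOpen ((t \ {a} : Set ℂ)ᶜ) := (ht.subset diff_subset).isClosed.isOpen_compl
  have hV : IsOpen ({a}ᶜ : Set ℂ) := isClosed_singleton.isOpen_compl
  obtain ⟨w, hws, hw1, hw2⟩ := hs _ _ hU hV
    (fun z hz => by
      by_cases h : z = a
      · exact Or.inl (by simp [h])
      · exact Or.inr h)
    ⟨a, ha, by simp⟩ ⟨b, hb, by simpa using fun h => hab h.symm⟩
  exact hw1 ⟨hst hws, hw2⟩

-- helper: differentiability of det with differentiable entries
lemma aux_differentiableAt_det {m : ℕ} {M : ℂ → Matrix (Fin m) (Fin m) ℂ} {z : ℂ}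
    (h : ∀ i j, DifferentiableAt ℂ (fun w => M w i j) z) :
    DifferentiableAt ℂ (fun w => (M w).det) z := by
  simp only [Matrix.det_apply']
  exact DifferentiableAt.fun_sum fun σ _ =>
    (DifferentiableAt.fun_finsetProd fun i _ => h (σ i) i).const_mul _


section Xclosure
variable {X : Set (ℂ → ℂ)}
  (hone : (fun _ : ℂ => (1 : ℂ)) ∈ X)
  (hadd : ∀ f ∈ X, ∀ g ∈ X, f + g ∈ X)
  (hsmul : ∀ (c : ℂ), ∀ f ∈ X, c • f ∈ X)
  (hmul : ∀ f ∈ X, ∀ g ∈ X, f * g ∈ X)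
  (hderiv : ∀ f ∈ X, deriv f ∈ X)

include hone hsmul in
lemma memX_zero : (fun _ : ℂ => (0:ℂ)) ∈ X := by
  have := hsmul 0 _ hone
  convert this using 1
  funext z; simp

include hone hsmul hadd in
lemma memX_sum {ι : Type*} (s : Finset ι) (F : ι → (ℂ → ℂ)) (h : ∀ i ∈ s, F i ∈ X) :
    (fun z => ∑ i ∈ s, F i z) ∈ X := by
  classical
  induction s using Finset.induction_on with
  | empty => simpa using memX_zero hone hsmul
  | insert a s hx ih =>
    have := hadd _ (h a (Finset.mem_insert_self a s)) _ (ih fun i hi => h i (Finset.mem_insert_of_mem hi))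
    convert this using 1
    funext z; simp [Finset.sum_insert hx]

include hone hmul in
lemma memX_prod {ι : Type*} (s : Finset ι) (F : ι → (ℂ → ℂ)) (h : ∀ i ∈ s, F i ∈ X) :
    (fun z => ∏ i ∈ s, F i z) ∈ X := by
  classical
  induction s using Finset.induction_on with
  | empty => simpa using hone
  | insert a s hx ih =>
    have := hmul _ (h a (Finset.mem_insert_self a s)) _ (ih fun i hi => h i (Finset.mem_insert_of_mem hi))
    convert this using 1
    funext z; simp [Finset.prod_insert hx]

include hderiv in
lemma memX_iteratedDeriv {f : ℂ → ℂ} (hf : f ∈ X) (k : ℕ) : iteratedDeriv k f ∈ X := by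
  induction k with
  | zero => simpa [iteratedDeriv_zero] using hf
  | succ k ih => rw [iteratedDeriv_succ]; exact hderiv _ ih

include hone hmul in
lemma memX_pow {f : ℂ → ℂ} (hf : f ∈ X) (k : ℕ) : f ^ k ∈ X := by
  induction k with
  | zero => simpa [pow_zero, Pi.one_def] using hone
  | succ k ih =>
    have := hmul _ ih _ hf
    convert this using 1
    exact pow_succ f k

include hone hsmul hadd hmul hderiv in
lemma memX_det {m : ℕ} (F : Fin m → Fin m → (ℂ → ℂ)) (h : ∀ i j, F i j ∈ X) :
    (fun z => (Matrix.of fun i j => F i j z).det) ∈ X := by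
  have : (fun z => ∑ σ : Equiv.Perm (Fin m),
      ((Equiv.Perm.sign σ : ℤ) : ℂ) * ∏ i, F (σ i) i z) ∈ X := by
    refine memX_sum hone hadd hsmul _ _ fun σ _ => ?_
    have hp := memX_prod hone hmul Finset.univ (fun i => F (σ i) i) (fun i _ => h _ _)
    have := hsmul ((Equiv.Perm.sign σ : ℤ) : ℂ) _ hp
    convert this using 1
    funext z; simp
  convert this using 1
  funext z
  rw [Matrix.det_apply']
  rfl
end Xclosure

noncomputable def bellp (g : ℂ → ℂ) : ℕ → ℕ → (ℂ → ℂ)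
  | 0, 0 => fun _ => 1
  | 0, _+1 => fun _ => 0
  | k+1, 0 => deriv (bellp g k 0)
  | k+1, m+1 => deriv (bellp g k (m+1)) + g * bellp g k m

lemma bellp_zero_of_lt (g : ℂ → ℂ) : ∀ k m : ℕ, k < m → bellp g k m = fun _ => 0 := by
  intro k
  induction k with
  | zero =>
    intro m hm
    obtain ⟨m', rfl⟩ := Nat.exists_eq_add_of_lt hm
    rfl
  | succ k ih =>
    intro m hm
    obtain ⟨m', rfl⟩ : ∃ m', m = m' + 1 := ⟨m - 1, by omega⟩
    show deriv (bellp g k (m'+1)) + g * bellp g k m' = fun _ => 0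
    rw [ih (m'+1) (by omega), ih m' (by omega)]
    funext z
    simp [deriv_const]

lemma bellp_diag (g : ℂ → ℂ) : ∀ k : ℕ, bellp g k k = g ^ k := by
  intro k
  induction k with
  | zero => rfl
  | succ k ih =>
    show deriv (bellp g k (k+1)) + g * bellp g k k = g ^ (k+1)
    rw [bellp_zero_of_lt g k (k+1) (by omega), ih]
    funext z
    simp [deriv_const, pow_succ, mul_comm]

section bellX
variable {X : Set (ℂ → ℂ)}
  (hone : (fun _ : ℂ => (1 : ℂ)) ∈ X)
  (hadd : ∀ f ∈ X, ∀ g ∈ X, f + g ∈ X)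
  (hsmul : ∀ (c : ℂ), ∀ f ∈ X, c • f ∈ X)
  (hmul : ∀ f ∈ X, ∀ g ∈ X, f * g ∈ X)
  (hderiv : ∀ f ∈ X, deriv f ∈ X)

include hone hadd hsmul hmul hderiv in
lemma memX_bellp {g : ℂ → ℂ} (hg : g ∈ X) : ∀ k m : ℕ, bellp g k m ∈ X := by
  intro k
  induction k with
  | zero =>
    intro m
    cases m with
    | zero => exact hone
    | succ m => exact memX_zero hone hsmul
  | succ k ih =>
    intro m
    cases m with
    | zero => exact hderiv _ (ih 0)
    | succ m => exact hadd _ (hderiv _ (ih (m+1))) _ (hmul _ hg _ (ih m))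
end bellX


lemma wronskian_lemma (Ω : Set ℂ) (hΩo : IsOpen Ω) (hΩc : IsPreconnected Ω) :
    ∀ (m : ℕ) (f : Fin (m+1) → ℂ → ℂ), (∀ j, DifferentiableOn ℂ (f j) Ω) →
    (∀ z ∈ Ω, (Matrix.of fun k j : Fin (m+1) => iteratedDeriv (k:ℕ) (f j) z).det = 0) →
    ∃ c : Fin (m+1) → ℂ, c ≠ 0 ∧ ∀ z ∈ Ω, ∑ j, c j * f j z = 0 := by
  intro m
  induction m with
  | zero =>
    intro f _ hdet
    refine ⟨fun _ => 1, ?_, ?_⟩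
    · intro h0
      have := congrFun h0 0
      simp at this
    · intro z hz
      have := hdet z hz
      rw [Matrix.det_fin_one] at this
      simpa [iteratedDeriv_zero] using this
  | succ m IH =>
    intro f hdiff hdet
    classical
    set A : ℂ → Matrix (Fin (m+1)) (Fin (m+1)) ℂ :=
      fun z => Matrix.of fun k j => iteratedDeriv (k:ℕ) (f j.castSucc) z with hA
    set W : ℂ → ℂ := fun z => (A z).det with hWdef
    have han : ∀ j, AnalyticOnNhd ℂ (f j) Ω := fun j => (hdiff j).analyticOnNhd hΩo
    have hitd : ∀ (j : Fin (m+2)) (k : ℕ), ∀ z ∈ Ω, DifferentiableAt ℂ (iteratedDeriv k (f j)) z := by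
      intro j k z hz
      rw [iteratedDeriv_eq_iterate]
      exact ((han j).iterated_deriv k z hz).differentiableAt
    have hWdiff : ∀ z ∈ Ω, DifferentiableAt ℂ W z := by
      intro z hz
      exact aux_differentiableAt_det (fun i j => hitd j.castSucc (i:ℕ) z hz)
    by_cases hW0 : ∀ z ∈ Ω, W z = 0
    · obtain ⟨c, hc0, hrel⟩ := IH (fun j => f j.castSucc) (fun j => hdiff j.castSucc) hW0
      refine ⟨Fin.snoc c 0, ?_, ?_⟩
      · intro h0
        apply hc0
        funext j
        have := congrFun h0 j.castSucc
        simpa [Fin.snoc_castSucc] using this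
      · intro z hz
        rw [Fin.sum_univ_castSucc]
        simp only [Fin.snoc_castSucc, Fin.snoc_last, zero_mul, add_zero]
        exact hrel z hz
    · push_neg at hW0
      obtain ⟨z₀, hz₀Ω, hz₀W⟩ := hW0
      set S : Set ℂ := {z | z ∈ Ω ∧ W z ≠ 0} with hS
      have hSsub : S ⊆ Ω := fun z hz => hz.1
      have hSo : IsOpen S := by
        rw [isOpen_iff_mem_nhds]
        rintro z ⟨hzΩ, hzW⟩
        filter_upwards [hΩo.mem_nhds hzΩ, (hWdiff z hzΩ).continuousAt.eventually_ne hzW]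
          with w h1 h2 using ⟨h1, h2⟩
      have hz₀S : z₀ ∈ S := ⟨hz₀Ω, hz₀W⟩
      set U : Set ℂ := connectedComponentIn S z₀ with hU
      have hUo : IsOpen U := hSo.connectedComponentIn
      have hUS : U ⊆ S := connectedComponentIn_subset _ _
      have hz₀U : z₀ ∈ U := mem_connectedComponentIn hz₀S
      have hUc : IsPreconnected U := (isPreconnected_connectedComponentIn)
      set v : ℂ → Fin (m+1) → ℂ :=
        fun z k => iteratedDeriv (k:ℕ) (f (Fin.last (m+1))) z with hv
      set cf : ℂ → Fin (m+1) → ℂ :=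
        fun z => (W z)⁻¹ • ((A z).adjugate *ᵥ v z) with hcf
      have hAc : ∀ z ∈ S, (A z) *ᵥ (cf z) = v z := by
        intro z hz
        have hWne := hz.2
        calc A z *ᵥ ((W z)⁻¹ • ((A z).adjugate *ᵥ v z))
            = (W z)⁻¹ • (A z *ᵥ ((A z).adjugate *ᵥ v z)) := Matrix.mulVec_smul _ _ _
          _ = (W z)⁻¹ • ((A z * (A z).adjugate) *ᵥ v z) := by rw [Matrix.mulVec_mulVec]
          _ = (W z)⁻¹ • (((A z).det • (1 : Matrix (Fin (m+1)) (Fin (m+1)) ℂ)) *ᵥ v z) := by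
              rw [Matrix.mul_adjugate]
          _ = v z := by
              rw [Matrix.smul_mulVec, Matrix.one_mulVec, smul_smul,
                inv_mul_cancel₀ hWne, one_smul]
      have hAc' : ∀ z ∈ S, ∀ k : Fin (m+1),
          ∑ j, cf z j * iteratedDeriv (k:ℕ) (f j.castSucc) z
            = iteratedDeriv (k:ℕ) (f (Fin.last (m+1))) z := by
        intro z hz k
        have := congrFun (hAc z hz) k
        simpa [Matrix.mulVec, dotProduct, mul_comm, hA] using this
      have huniq : ∀ z ∈ S, ∀ x : Fin (m+1) → ℂ,
          (∀ k : Fin (m+1), ∑ j, x j * iteratedDeriv (k:ℕ) (f j.castSucc) z = 0) → x = 0 := by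
        intro z hz x hx
        by_contra hxne
        apply hz.2
        apply Matrix.exists_mulVec_eq_zero_iff.mp
        refine ⟨x, hxne, ?_⟩
        funext k
        have := hx k
        simpa [Matrix.mulVec, dotProduct, mul_comm, hA] using this
      have hrel : ∀ z ∈ S, ∀ k : Fin (m+2),
          iteratedDeriv (k:ℕ) (f (Fin.last (m+1))) z
            = ∑ j : Fin (m+1), cf z j * iteratedDeriv (k:ℕ) (f j.castSucc) z := by
        intro z hz
        obtain ⟨d, hd0, hMd⟩ := Matrix.exists_mulVec_eq_zero_iff.mpr (hdet z hz.1)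
        have hrow : ∀ k : Fin (m+2),
            (∑ j : Fin (m+1), iteratedDeriv (k:ℕ) (f j.castSucc) z * d j.castSucc)
              + iteratedDeriv (k:ℕ) (f (Fin.last (m+1))) z * d (Fin.last (m+1)) = 0 := by
          intro k
          have := congrFun hMd k
          simpa [Matrix.mulVec, dotProduct, Fin.sum_univ_castSucc] using this
        have hdlast : d (Fin.last (m+1)) ≠ 0 := by
          intro h0
          apply hd0
          have hcz : (fun j : Fin (m+1) => d j.castSucc) = 0 := by
            apply huniq z hz
            intro k
            have := hrow k.castSucc
            rw [h0, mul_zero, add_zero] at this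
            simpa [mul_comm] using this
          funext j
          induction j using Fin.lastCases with
          | last => exact h0
          | cast i => exact congrFun hcz i
        set e : Fin (m+1) → ℂ := fun j => -(d j.castSucc) / d (Fin.last (m+1)) with he
        have he' : ∀ k : Fin (m+2),
            ∑ j, e j * iteratedDeriv (k:ℕ) (f j.castSucc) z
              = iteratedDeriv (k:ℕ) (f (Fin.last (m+1))) z := by
          intro k
          have h1 := hrow k
          have h2 : ∑ j, e j * iteratedDeriv (k:ℕ) (f j.castSucc) z
              = (d (Fin.last (m+1)))⁻¹
                * -(∑ j : Fin (m+1), iteratedDeriv (k:ℕ) (f j.castSucc) z * d j.castSucc) := by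
            rw [← Finset.sum_neg_distrib, Finset.mul_sum]
            refine Finset.sum_congr rfl fun j _ => ?_
            simp only [he]
            rw [div_eq_mul_inv]
            ring
          rw [h2, show (∑ j : Fin (m+1), iteratedDeriv (k:ℕ) (f j.castSucc) z * d j.castSucc)
            = -(iteratedDeriv (k:ℕ) (f (Fin.last (m+1))) z * d (Fin.last (m+1))) from by
              linear_combination h1]
          field_simp
          try exact Or.inl trivial
        have hce : cf z = e := by
          have hsub : (fun j => cf z j - e j) = 0 := by
            apply huniq z hz
            intro k
            simp only [sub_mul]
            have h3 := he' k.castSucc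
            rw [Fin.coe_castSucc] at h3
            rw [Finset.sum_sub_distrib, hAc' z hz k, h3]
            simp
          funext j
          have := congrFun hsub j
          simpa [sub_eq_zero] using this
        intro k
        rw [hce]
        exact (he' k).symm
      -- differentiability of the coefficient functions on S
      have hadj : ∀ (i j : Fin (m+1)), ∀ y ∈ S, DifferentiableAt ℂ (fun w => (A w).adjugate j i) y := by
        intro i j y hy
        have hrw : (fun w => (A w).adjugate j i)
            = fun w => ((A w).updateRow i (Pi.single j 1)).det := by
          funext w; rw [Matrix.adjugate_apply]
        rw [hrw]
        apply aux_differentiableAt_det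
        intro a b
        have hrw2 : (fun w => ((A w).updateRow i (Pi.single j 1)) a b)
            = (fun w => if a = i then (Pi.single j (1:ℂ) : Fin (m+1) → ℂ) b
                else iteratedDeriv (a:ℕ) (f b.castSucc) w : ℂ → ℂ) := by
          funext w; rw [Matrix.updateRow_apply]; rfl
        rw [hrw2]
        by_cases hai : a = i
        · simp only [hai, if_pos rfl]
          exact differentiableAt_const _
        · simp only [if_neg hai]
          exact hitd b.castSucc (a:ℕ) y (hSsub hy)
      have hcdiff : ∀ (j : Fin (m+1)), ∀ y ∈ S, DifferentiableAt ℂ (fun w => cf w j) y := by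
        intro j y hy
        have hrw : (fun w => cf w j) = fun w => (W w)⁻¹
            * ∑ i, (A w).adjugate j i * iteratedDeriv (i:ℕ) (f (Fin.last (m+1))) w := by
          funext w
          simp [hcf, Matrix.mulVec, dotProduct, hv]
        rw [hrw]
        exact ((hWdiff y (hSsub hy)).inv hy.2).mul
          (DifferentiableAt.fun_sum fun i _ => (hadj i j y hy).mul (hitd _ _ y (hSsub hy)))
      -- the coefficient functions have zero derivative on S
      have hreld : ∀ z ∈ S, ∀ j, deriv (fun w => cf w j) z = 0 := by
        intro z hz
        have key : ∀ k : Fin (m+1),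
            ∑ j, deriv (fun w => cf w j) z * iteratedDeriv (k:ℕ) (f j.castSucc) z = 0 := by
          intro k
          have hEq : Set.EqOn (iteratedDeriv (k:ℕ) (f (Fin.last (m+1))))
              (fun w => ∑ j, cf w j * iteratedDeriv (k:ℕ) (f j.castSucc) w) S := by
            intro w hw
            have := hrel w hw k.castSucc
            rwa [Fin.coe_castSucc] at this
          have hder := (hEq.eventuallyEq_of_mem (hSo.mem_nhds hz)).deriv_eq
          have hL : deriv (iteratedDeriv (k:ℕ) (f (Fin.last (m+1)))) z
              = iteratedDeriv ((k:ℕ)+1) (f (Fin.last (m+1))) z := by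
            rw [iteratedDeriv_succ]
          have hR : deriv (fun w => ∑ j, cf w j * iteratedDeriv (k:ℕ) (f j.castSucc) w) z
              = ∑ j, (deriv (fun w => cf w j) z * iteratedDeriv (k:ℕ) (f j.castSucc) z
                  + cf z j * iteratedDeriv ((k:ℕ)+1) (f j.castSucc) z) := by
            rw [deriv_fun_sum (A := fun j w => cf w j * iteratedDeriv (k:ℕ) (f j.castSucc) w) fun j _ => ((hcdiff j z hz).mul (hitd j.castSucc (k:ℕ) z hz.1))]
            refine Finset.sum_congr rfl fun j _ => ?_
            rw [deriv_fun_mul (hcdiff j z hz) (hitd j.castSucc (k:ℕ) z hz.1)]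
            rw [iteratedDeriv_succ]
          have hsucc := hrel z hz k.succ
          rw [Fin.val_succ] at hsucc
          rw [hL, hR] at hder
          rw [Finset.sum_add_distrib] at hder
          linear_combination hsucc - hder
        have := huniq z hz (fun j => deriv (fun w => cf w j) z) key
        intro j
        exact congrFun this j
      -- coefficients are constant on U
      have hconst : ∀ j, ∀ z ∈ U, cf z j = cf z₀ j := by
        intro j z hz
        exact aux_const_of_deriv_zero hUo hUc
          (fun y hy => hcdiff j y (hUS hy)) (fun y hy => hreld y (hUS hy) j) hz hz₀U
      -- the linear relation holds on U, then on Ω by the identity theorem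
      set h : ℂ → ℂ := fun z => f (Fin.last (m+1)) z - ∑ j, cf z₀ j * f j.castSucc z with hh
      have hhdiff : DifferentiableOn ℂ h Ω := by
        apply DifferentiableOn.sub (hdiff (Fin.last (m+1)))
        apply DifferentiableOn.fun_sum
        intro j _
        exact (hdiff j.castSucc).const_smul (cf z₀ j)
      have hhan : AnalyticOnNhd ℂ h Ω := hhdiff.analyticOnNhd hΩo
      have hU0 : ∀ z ∈ U, h z = 0 := by
        intro z hz
        have h0 := hrel z (hUS hz) 0
        simp only [Fin.val_zero, iteratedDeriv_zero] at h0
        have : ∑ j, cf z j * f j.castSucc z = ∑ j, cf z₀ j * f j.castSucc z :=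
          Finset.sum_congr rfl fun j _ => by rw [hconst j z hz]
        rw [hh]
        simp only []
        rw [← this]
        linear_combination h0
      have hΩ0 : Set.EqOn h 0 Ω := by
        apply hhan.eqOn_zero_of_preconnected_of_eventuallyEq_zero hΩc hz₀Ω
        filter_upwards [hUo.mem_nhds hz₀U] with w hw using hU0 w hw
      refine ⟨Fin.snoc (fun j => -(cf z₀ j)) 1, ?_, ?_⟩
      · intro hc0
        have := congrFun hc0 (Fin.last (m+1))
        rw [Fin.snoc_last] at this
        simpa using this
      · intro z hz
        have hz0 := hΩ0 hz
        simp only [Pi.zero_apply, hh] at hz0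
        rw [Fin.sum_univ_castSucc]
        simp only [Fin.snoc_castSucc, Fin.snoc_last, one_mul, neg_mul,
          Finset.sum_neg_distrib]
        linear_combination hz0


lemma pow_expand {Ω : Set ℂ} (hΩo : IsOpen Ω) {f g : ℂ → ℂ}
    (hf : DifferentiableOn ℂ f Ω) (hf' : Set.EqOn (deriv f) g Ω)
    (hbdiff : ∀ k m : ℕ, DifferentiableOn ℂ (bellp g k m) Ω) :
    ∀ (k j : ℕ), ∀ z ∈ Ω, iteratedDeriv k (f ^ j) z
      = ∑ m ∈ Finset.range (k+1),
          bellp g k m z * (Nat.descFactorial j m : ℂ) * (f z) ^ (j - m) := by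
  intro k
  induction k with
  | zero =>
    intro j z hz
    simp [iteratedDeriv_zero, Finset.sum_range_one, bellp]
  | succ k ih =>
    intro j z hz
    have hfz : DifferentiableAt ℂ f z := hf.differentiableAt (hΩo.mem_nhds hz)
    have hbz : ∀ k' m' : ℕ, DifferentiableAt ℂ (bellp g k' m') z :=
      fun k' m' => (hbdiff k' m').differentiableAt (hΩo.mem_nhds hz)
    have hEq : Set.EqOn (iteratedDeriv k (f ^ j))
        (fun w => ∑ m ∈ Finset.range (k+1),
          bellp g k m w * (Nat.descFactorial j m : ℂ) * (f w) ^ (j - m)) Ω :=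
      fun w hw => ih j w hw
    rw [iteratedDeriv_succ]
    rw [(hEq.eventuallyEq_of_mem (hΩo.mem_nhds hz)).deriv_eq]
    rw [deriv_fun_sum (A := fun m w => bellp g k m w * (Nat.descFactorial j m : ℂ) * (f w) ^ (j - m)) (fun m _ => ((hbz k m).mul_const _).mul (hfz.pow _))]
    have hterm : ∀ m ∈ Finset.range (k+1),
        deriv (fun w => bellp g k m w * (Nat.descFactorial j m : ℂ) * (f w) ^ (j - m)) z
        = deriv (bellp g k m) z * (Nat.descFactorial j m : ℂ) * f z ^ (j - m)
          + g z * bellp g k m z * (Nat.descFactorial j (m+1) : ℂ) * f z ^ (j - (m+1)) := by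
      intro m _
      rw [deriv_fun_mul (d := fun w => f w ^ (j - m)) ((hbz k m).mul_const _) (hfz.pow _)]
      rw [deriv_mul_const (hbz k m)]
      rw [deriv_fun_pow hfz _, hf' hz]
      rw [Nat.descFactorial_succ, ← Nat.sub_sub]
      push_cast
      ring
    rw [Finset.sum_congr rfl hterm, Finset.sum_add_distrib]
    -- abbreviations
    set P : ℕ → ℂ := fun m => deriv (bellp g k m) z * (Nat.descFactorial j m : ℂ) * f z ^ (j - m)
      with hP
    set Q : ℕ → ℂ := fun m =>
        g z * bellp g k m z * (Nat.descFactorial j (m+1) : ℂ) * f z ^ (j - (m+1)) with hQ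
    have hPlast : P (k+1) = 0 := by
      rw [hP]
      simp only []
      rw [bellp_zero_of_lt g k (k+1) (Nat.lt_succ_self k)]
      simp [deriv_const]
    have hRHS : ∑ m ∈ Finset.range (k+2),
        bellp g (k+1) m z * (Nat.descFactorial j m : ℂ) * f z ^ (j - m)
        = (∑ m ∈ Finset.range (k+1), (P (m+1) + Q m)) + P 0 := by
      rw [Finset.sum_range_succ' _ (k+1)]
      congr 1
      · refine Finset.sum_congr rfl fun m _ => ?_
        have hb : bellp g (k+1) (m+1) = deriv (bellp g k (m+1)) + g * bellp g k m := rfl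
        rw [hb]
        simp only [Pi.add_apply, Pi.mul_apply, hP, hQ]
        try ring
    rw [hRHS, Finset.sum_add_distrib]
    have hPsum : ∑ m ∈ Finset.range (k+1), P (m+1) + P 0 = ∑ m ∈ Finset.range (k+1), P m := by
      rw [← Finset.sum_range_succ' P (k+1), Finset.sum_range_succ P (k+1), hPlast, add_zero]
    linear_combination -hPsum

lemma powers_det {Ω : Set ℂ} (hΩo : IsOpen Ω) {f g : ℂ → ℂ}
    (hf : DifferentiableOn ℂ f Ω) (hf' : Set.EqOn (deriv f) g Ω)
    (hbdiff : ∀ k m : ℕ, DifferentiableOn ℂ (bellp g k m) Ω)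
    (n : ℕ) {z : ℂ} (hz : z ∈ Ω) :
    (Matrix.of fun k j : Fin (n+1) => iteratedDeriv (k:ℕ) (f ^ (j:ℕ)) z).det
      = g z ^ (∑ i : Fin (n+1), (i:ℕ)) * ∏ j : Fin (n+1), (Nat.factorial (j:ℕ) : ℂ) := by
  classical
  set Bm : Matrix (Fin (n+1)) (Fin (n+1)) ℂ :=
    Matrix.of fun k m : Fin (n+1) => bellp g (k:ℕ) (m:ℕ) z with hBm
  set Nm : Matrix (Fin (n+1)) (Fin (n+1)) ℂ :=
    Matrix.of fun m j : Fin (n+1) =>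
      (Nat.descFactorial (j:ℕ) (m:ℕ) : ℂ) * f z ^ ((j:ℕ) - (m:ℕ)) with hNm
  have hM : (Matrix.of fun k j : Fin (n+1) => iteratedDeriv (k:ℕ) (f ^ (j:ℕ)) z)
      = Bm * Nm := by
    ext k j
    rw [Matrix.mul_apply]
    rw [Matrix.of_apply, pow_expand hΩo hf hf' hbdiff (k:ℕ) (j:ℕ) z hz]
    have h1 : ∑ m : Fin (n+1), Bm k m * Nm m j
        = ∑ m ∈ Finset.range (n+1), bellp g (k:ℕ) m z
            * ((Nat.descFactorial (j:ℕ) m : ℂ) * f z ^ ((j:ℕ) - m)) :=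
      Fin.sum_univ_eq_sum_range
        (fun m => bellp g (k:ℕ) m z * ((Nat.descFactorial (j:ℕ) m : ℂ) * f z ^ ((j:ℕ) - m)))
        (n+1)
    rw [h1]
    rw [← Finset.sum_subset (Finset.range_subset_range.mpr (Nat.succ_le_succ (Nat.lt_succ_iff.mp k.isLt)))
      (fun m _ hm => ?_)]
    · exact Finset.sum_congr rfl fun m _ => by ring
    · rw [bellp_zero_of_lt g (k:ℕ) m (by
        simp only [Finset.mem_range] at hm ⊢
        omega)]
      simp
  rw [hM, Matrix.det_mul]
  have hdetB : Bm.det = g z ^ (∑ i : Fin (n+1), (i:ℕ)) := by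
    rw [Matrix.det_of_lowerTriangular Bm (fun i j hij => by
      rw [hBm, Matrix.of_apply, bellp_zero_of_lt g (i:ℕ) (j:ℕ) (by exact_mod_cast hij)])]
    rw [← Finset.prod_pow_eq_pow_sum]
    refine Finset.prod_congr rfl fun i _ => ?_
    rw [hBm, Matrix.of_apply, bellp_diag g (i:ℕ), Pi.pow_apply]
  have hdetN : Nm.det = ∏ j : Fin (n+1), (Nat.factorial (j:ℕ) : ℂ) := by
    rw [Matrix.det_of_upperTriangular (M := Nm) (fun i j hij => by
      rw [hNm, Matrix.of_apply]
      rw [show Nat.descFactorial (j:ℕ) (i:ℕ) = 0 from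
        Nat.descFactorial_eq_zero_iff_lt.mpr (by exact_mod_cast hij)]
      simp)]
    refine Finset.prod_congr rfl fun j _ => ?_
    rw [hNm, Matrix.of_apply, Nat.descFactorial_self, Nat.sub_self, pow_zero, mul_one]
  rw [hdetB, hdetN]


theorem stmt_14 (Ω : Set ℂ) (hΩopen : IsOpen Ω) (hΩconn : IsConnected Ω)
    (X : Set (ℂ → ℂ))
    (hhol : ∀ f ∈ X, DifferentiableOn ℂ f Ω)
    (hone : (fun _ : ℂ => (1 : ℂ)) ∈ X)
    (hadd : ∀ f ∈ X, ∀ g ∈ X, f + g ∈ X)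
    (hsmul : ∀ (c : ℂ), ∀ f ∈ X, c • f ∈ X)
    (hmul : ∀ f ∈ X, ∀ g ∈ X, f * g ∈ X)
    (hderiv : ∀ f ∈ X, deriv f ∈ X)
    (hanti : ∀ g ∈ X, ∃ f ∈ X, Set.EqOn (deriv f) g Ω)
    (n : ℕ) (hn : 1 ≤ n) (E : Set ℂ) :
    (∃ f : Fin (n + 1) → ℂ → ℂ, (∀ j, f j ∈ X) ∧
        (∀ c : Fin (n + 1) → ℂ, (∀ z ∈ Ω, ∑ j, c j * f j z = 0) → c = 0) ∧
        E = {z ∈ Ω |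
          (Matrix.of fun k j : Fin (n + 1) => iteratedDeriv (k : ℕ) (f j) z).det = 0}) ↔
      (∃ g ∈ X, (∃ z ∈ Ω, g z ≠ 0) ∧ E = {z ∈ Ω | g z = 0}) := by
  classical
  constructor
  · rintro ⟨f, hfX, hindep, hE⟩
    refine ⟨fun z => (Matrix.of fun k j : Fin (n + 1) =>
        iteratedDeriv (k : ℕ) (f j) z).det, ?_, ?_, hE⟩
    · exact memX_det hone hadd hsmul hmul hderiv
        (fun k j => iteratedDeriv (k : ℕ) (f j))
        (fun k j => memX_iteratedDeriv hderiv (hfX j) (k : ℕ))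
    · by_contra hnone
      push_neg at hnone
      obtain ⟨c, hc0, hcrel⟩ := wronskian_lemma Ω hΩopen hΩconn.isPreconnected n f
        (fun j => hhol _ (hfX j)) hnone
      exact hc0 (hindep c hcrel)
  · rintro ⟨g, hgX, ⟨z₀, hz₀, hgz₀⟩, hE⟩
    obtain ⟨f, hfX, hf'⟩ := hanti g hgX
    have hfd : DifferentiableOn ℂ f Ω := hhol f hfX
    have hbX : ∀ k m : ℕ, bellp g k m ∈ X := memX_bellp hone hadd hsmul hmul hderiv hgX
    have hbdiff : ∀ k m : ℕ, DifferentiableOn ℂ (bellp g k m) Ω :=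
      fun k m => hhol _ (hbX k m)
    refine ⟨fun j => f ^ (j : ℕ), fun j => memX_pow hone hmul hfX _, ?_, ?_⟩
    · -- linear independence of the powers of f
      intro c hc
      set p : Polynomial ℂ := ∑ j : Fin (n + 1), Polynomial.C (c j) * Polynomial.X ^ (j : ℕ)
        with hp
      obtain ⟨r, hr, hball⟩ := Metric.isOpen_iff.1 hΩopen z₀ hz₀
      have hroot : ∀ z ∈ Metric.ball z₀ r, p.IsRoot (f z) := by
        intro z hz
        have h0 := hc z (hball hz)
        simp only [Pi.pow_apply] at h0
        rw [Polynomial.IsRoot, hp]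
        rw [Polynomial.eval_finset_sum]
        simp only [Polynomial.eval_mul, Polynomial.eval_C, Polynomial.eval_pow,
          Polynomial.eval_X]
        exact h0
      have hp0 : p = 0 := by
        by_contra hpne
        have hfin := Polynomial.finite_setOf_isRoot hpne
        have hconn : IsPreconnected (f '' Metric.ball z₀ r) :=
          ((convex_ball z₀ r).isPreconnected).image f (hfd.continuousOn.mono hball)
        have hsub2 : f '' Metric.ball z₀ r ⊆ {x | p.IsRoot x} := by
          rintro _ ⟨z, hz, rfl⟩
          exact hroot z hz
        have hss := aux_subsingleton_of_finite hconn hsub2 hfin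
        have hconst : ∀ z ∈ Metric.ball z₀ r, f z = f z₀ := fun z hz =>
          hss (Set.mem_image_of_mem f hz)
            (Set.mem_image_of_mem f (Metric.mem_ball_self hr))
        have hd0 : deriv f z₀ = 0 := by
          have heq : f =ᶠ[nhds z₀] (fun _ => f z₀) := by
            filter_upwards [Metric.ball_mem_nhds z₀ hr] with w hw using hconst w hw
          rw [heq.deriv_eq, deriv_const]
        exact hgz₀ (by rw [← hf' hz₀, hd0])
      funext j
      have hcoeff := congrArg (fun q => Polynomial.coeff q (j : ℕ)) hp0
      simp only [hp, Polynomial.finset_sum_coeff, Polynomial.coeff_C_mul,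
        Polynomial.coeff_X_pow, Polynomial.coeff_zero, mul_ite, mul_one, mul_zero] at hcoeff
      rw [Finset.sum_eq_single j (fun i _ hij => by
          rw [if_neg (fun h => hij (Fin.ext (by
            have hj := j.isLt; have hi := i.isLt; omega)))]) (by simp)] at hcoeff
      simpa using hcoeff
    · -- the zero sets agree
      rw [hE]
      ext z
      simp only [Set.mem_setOf_eq]
      have hT : (∑ i : Fin (n + 1), (i : ℕ)) ≠ 0 := by
        intro h0
        rw [Finset.sum_eq_zero_iff] at h0
        have := h0 ⟨1, by omega⟩ (Finset.mem_univ _)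
        simp at this
      have hC : (∏ j : Fin (n + 1), (Nat.factorial (j : ℕ) : ℂ)) ≠ 0 := by
        rw [Finset.prod_ne_zero_iff]
        intro j _
        exact_mod_cast Nat.factorial_ne_zero (j : ℕ)
      constructor
      · rintro ⟨hzΩ, hgz⟩
        refine ⟨hzΩ, ?_⟩
        rw [powers_det hΩopen hfd hf' hbdiff n hzΩ, hgz, zero_pow hT, zero_mul]
      · rintro ⟨hzΩ, hdz⟩
        refine ⟨hzΩ, ?_⟩
        rw [powers_det hΩopen hfd hf' hbdiff n hzΩ, mul_eq_zero] at hdz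
        rcases hdz with h | h
        · exact pow_eq_zero_iff hT |>.mp h
        · exact absurd h hC
end
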